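/- Let L = |u|·det(u,a,b)/|u×a|² with u,a,b ∈ ℝ³, u×a ≠ 0. Then for each j, ∂L/∂b^j = (|u|/|u×a|²)(u×a)_j, and these partial derivatives admit a potential in a: there is a function λ(u,a) (namely λ = arctan[(a₁|u|² − ⟨u,a⟩u₁)/(|u|(u₂a₃ − u₃a₂))] on the domain where defined) with ∂λ/∂a^s = (|u|/|u×a|²)(u×a)_s. -/

import Mathlib

open scoped BigOperators

noncomputable section

def dot (u v : Fin 3 → ℝ) : ℝ := ∑ k, u k * v k

def cross (u v : Fin 3 → ℝ) : Fin 3 → ℝ :=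
  ![u 1 * v 2 - u 2 * v 1, u 2 * v 0 - u 0 * v 2, u 0 * v 1 - u 1 * v 0]

/-- The Lagrangian `L = |u|·⟨u×a,b⟩/|u×a|²` as a function of `(u,a,b)`. -/
def Lcg (u a b : Fin 3 → ℝ) : ℝ :=
  Real.sqrt (dot u u) * dot (cross u a) b / dot (cross u a) (cross u a)

/-- The potential `λ(u,a) = arctan[(a₁|u|² − ⟨u,a⟩u₁)/(|u|(u₂a₃ − u₃a₂))]`
(indices 1,2,3 are `0,1,2` here). -/
def lampot (u a : Fin 3 → ℝ) : ℝ :=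
  Real.arctan ((a 0 * dot u u - dot u a * u 0) /
    (Real.sqrt (dot u u) * (u 1 * a 2 - u 2 * a 1)))

/-- The linear functional `v ↦ ∑ k, c k * v k` as a continuous linear map. -/
def lin3 (c : Fin 3 → ℝ) : (Fin 3 → ℝ) →L[ℝ] ℝ :=
  ∑ k, c k • (ContinuousLinearMap.proj k : (Fin 3 → ℝ) →L[ℝ] ℝ)

lemma lin3_apply (c v : Fin 3 → ℝ) : lin3 c v = ∑ k, c k * v k := by
  simp [lin3]

lemma hasFDerivAt_lin3 (c x : Fin 3 → ℝ) :
    HasFDerivAt (fun v : Fin 3 → ℝ => ∑ k, c k * v k) (lin3 c) x := by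
  apply HasFDerivAt.fun_sum
  intro k _
  exact ((ContinuousLinearMap.proj k : (Fin 3 → ℝ) →L[ℝ] ℝ)).hasFDerivAt.const_mul (c k)

lemma lin3_single (c : Fin 3 → ℝ) (j : Fin 3) : lin3 c (Pi.single j 1) = c j := by
  rw [lin3_apply]
  fin_cases j <;> simp [Fin.sum_univ_three, Pi.single_apply]

lemma dot_pos (v : Fin 3 → ℝ) (hv : v ≠ 0) : 0 < dot v v := by
  obtain ⟨k, hk⟩ := Function.ne_iff.mp hv
  simp only [Pi.zero_apply] at hk
  exact Finset.sum_pos' (fun i _ => mul_self_nonneg (v i))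
    ⟨k, Finset.mem_univ k, mul_self_pos.mpr hk⟩

lemma alg (s w0 W Na n_ c_ ws : ℝ) (hs0 : s ≠ 0) (hw0 : w0 ≠ 0) (hW : W ≠ 0)
    (key : (n_ * w0 - Na * c_) * W = ws * (s^2 * w0^2 + Na^2)) :
    1 / (1 + (Na * (s * w0)⁻¹)^2) *
      (Na * (-((s * w0)^2)⁻¹ * (s * c_)) + (s * w0)⁻¹ * n_) = s / W * ws := by
  have hD : s^2 * w0^2 + Na^2 ≠ 0 := by positivity
  field_simp
  linear_combination key

/-- `∂L/∂b^j = (|u|/|u×a|²)(u×a)_j`, and these partial derivatives admit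
the potential `λ` in the `a`-variables: `∂λ/∂a^s = (|u|/|u×a|²)(u×a)_s`, on the open set
where `u ≠ 0`, `u×a ≠ 0` and `u₂a₃ − u₃a₂ ≠ 0`. -/
theorem dLdb_has_potential (u a b : Fin 3 → ℝ)
    (hu : u ≠ 0) (hca : cross u a ≠ 0) (hdenom : u 1 * a 2 - u 2 * a 1 ≠ 0) :
    (∀ j, fderiv ℝ (fun b' => Lcg u a b') b (Pi.single j 1)
        = Real.sqrt (dot u u) / dot (cross u a) (cross u a) * cross u a j) ∧
    (∀ s, fderiv ℝ (fun a' => lampot u a') a (Pi.single s 1)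
        = Real.sqrt (dot u u) / dot (cross u a) (cross u a) * cross u a s) := by
  have hW : dot (cross u a) (cross u a) ≠ 0 := ne_of_gt (dot_pos _ hca)
  have hP : (0:ℝ) < dot u u := dot_pos u hu
  have hs0 : Real.sqrt (dot u u) ≠ 0 := ne_of_gt (Real.sqrt_pos.mpr hP)
  have hs2 : Real.sqrt (dot u u) ^ 2 = dot u u := Real.sq_sqrt hP.le
  constructor
  · intro j
    have h1 : (fun b' => Lcg u a b')
        = fun b' => ∑ k, (fun k => Real.sqrt (dot u u) * cross u a k
            / dot (cross u a) (cross u a)) k * b' k := by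
      funext b'
      simp only [Lcg, dot, Fin.sum_univ_three]
      ring
    rw [h1, (hasFDerivAt_lin3 _ b).fderiv, lin3_single]
    ring
  · intro σ
    set s := Real.sqrt (dot u u) with hsdef
    set ncoef : Fin 3 → ℝ := ![dot u u - u 0 * u 0, -(u 0 * u 1), -(u 0 * u 2)] with hnc
    set cvec : Fin 3 → ℝ := ![0, -(u 2), u 1] with hcv
    have hN : HasFDerivAt (fun a' : Fin 3 → ℝ => a' 0 * dot u u - dot u a' * u 0)
        (lin3 ncoef) a := by
      have hfe : (fun a' : Fin 3 → ℝ => a' 0 * dot u u - dot u a' * u 0)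
          = fun v => ∑ k, ncoef k * v k := by
        funext v
        simp [dot, hnc, Fin.sum_univ_three]
        ring
      rw [hfe]; exact hasFDerivAt_lin3 _ a
    have hD : HasFDerivAt (fun a' : Fin 3 → ℝ => s * (u 1 * a' 2 - u 2 * a' 1))
        (lin3 (fun k => s * cvec k)) a := by
      have hfe : (fun a' : Fin 3 → ℝ => s * (u 1 * a' 2 - u 2 * a' 1))
          = fun v => ∑ k, (s * cvec k) * v k := by
        funext v
        simp [hcv, Fin.sum_univ_three]
        ring
      rw [hfe]; exact hasFDerivAt_lin3 _ a
    have hDa : s * (u 1 * a 2 - u 2 * a 1) ≠ 0 := mul_ne_zero hs0 hdenom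
    have hInv : HasFDerivAt (fun a' : Fin 3 → ℝ => (s * (u 1 * a' 2 - u 2 * a' 1))⁻¹)
        ((-((s * (u 1 * a 2 - u 2 * a 1)) ^ 2)⁻¹) • lin3 (fun k => s * cvec k)) a :=
      (hasDerivAt_inv hDa).comp_hasFDerivAt a hD
    have hMul := hN.fun_mul hInv
    have harc := (Real.hasDerivAt_arctan
        ((a 0 * dot u u - dot u a * u 0) * (s * (u 1 * a 2 - u 2 * a 1))⁻¹)).comp_hasFDerivAt
        a hMul
    have hfun : (fun a' => lampot u a')
        = Real.arctan ∘ (fun a' : Fin 3 → ℝ =>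
            (a' 0 * dot u u - dot u a' * u 0) * (s * (u 1 * a' 2 - u 2 * a' 1))⁻¹) := by
      funext a'
      simp [lampot, div_eq_mul_inv, hsdef]
    rw [hfun, harc.fderiv]
    simp only [ContinuousLinearMap.coe_smul', Pi.smul_apply, ContinuousLinearMap.add_apply,
      ContinuousLinearMap.smul_apply, lin3_single, smul_eq_mul]
    have key : (ncoef σ * (u 1 * a 2 - u 2 * a 1)
          - (a 0 * dot u u - dot u a * u 0) * cvec σ) * dot (cross u a) (cross u a)
        = cross u a σ * (s ^ 2 * (u 1 * a 2 - u 2 * a 1) ^ 2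
            + (a 0 * dot u u - dot u a * u 0) ^ 2) := by
      rw [hs2]
      fin_cases σ <;>
        · simp [dot, cross, hnc, hcv, Fin.sum_univ_three]
          ring
    have halg := alg s (u 1 * a 2 - u 2 * a 1) (dot (cross u a) (cross u a))
      (a 0 * dot u u - dot u a * u 0) (ncoef σ) (cvec σ) (cross u a σ)
      hs0 hdenom hW key
    linear_combination halg
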